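/- Let n, k be positive integers with k > n, and let P = ℂ[z_{αi} (1 ≤ α ≤ n, 1 ≤ i ≤ k), w₁, …, w_k]. For 1 ≤ α ≤ n define q_α = Σ_{i=1}^k z_{αi} w_i, and let det₊ ∈ P be the determinant of the n×n matrix (z_{αi})_{1 ≤ α, i ≤ n}. If f ∈ ℂ[w_{n+1}, …, w_k] (regarded as a subring of P) satisfies f · det₊ ∈ (q₁, …, q_n), then f = 0. Consequently the map ℂ[w_{n+1},…,w_k] → P/(q₁,…,q_n), f ↦ f·det₊, is injective. -/
import Mathlib


open MvPolynomial

/-- The quadratic polynomial `q_α = Σ_{i=1}^k z_{αi} w_i` in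
`P = ℂ[z_{αi} (1 ≤ α ≤ n, 1 ≤ i ≤ k), w₁, …, w_k]` (the variables `z_{αi}` indexed by
`Sum.inl (α, i)`, the variables `w_i` by `Sum.inr i`). -/
noncomputable def qPoly (n k : ℕ) (α : Fin n) :
    MvPolynomial ((Fin n × Fin k) ⊕ Fin k) ℂ :=
  ∑ i : Fin k, X (Sum.inl (α, i)) * X (Sum.inr i)

/-- `det₊ ∈ P`: the determinant of the upper-left `n×n` block `(z_{αi})_{1 ≤ α,i ≤ n}`
(assuming `n ≤ k`). -/
noncomputable def detPlus (n k : ℕ) (hnk : n ≤ k) :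
    MvPolynomial ((Fin n × Fin k) ⊕ Fin k) ℂ :=
  Matrix.det (Matrix.of fun α i : Fin n =>
    (X (Sum.inl (α, Fin.castLE hnk i)) : MvPolynomial ((Fin n × Fin k) ⊕ Fin k) ℂ))

/-- The inclusion `ℂ[w_{n+1},…,w_k] → P`, where the subring of `w`-variables with index
greater than `n` is realized as polynomials on `{i : Fin k // n ≤ i}`. -/
noncomputable def wTailIncl (n k : ℕ) :
    MvPolynomial {i : Fin k // n ≤ (i : ℕ)} ℂ →ₐ[ℂ]
      MvPolynomial ((Fin n × Fin k) ⊕ Fin k) ℂ :=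
  rename fun i => Sum.inr i.1

/-- The specialization `z_{αi} ↦ δ_{αi}`, `w_i ↦ 0` for `i ≤ n`, `w_i ↦ w_i` for `i > n`. -/
noncomputable def specHom (n k : ℕ) :
    MvPolynomial ((Fin n × Fin k) ⊕ Fin k) ℂ →ₐ[ℂ]
      MvPolynomial {i : Fin k // n ≤ (i : ℕ)} ℂ :=
  aeval (fun v => match v with
    | Sum.inl (α, i) => if (i : ℕ) = (α : ℕ) then 1 else 0
    | Sum.inr i => if h : n ≤ (i : ℕ) then X ⟨i, h⟩ else 0)

lemma specHom_qPoly (n k : ℕ) (α : Fin n) : specHom n k (qPoly n k α) = 0 := by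
  unfold specHom qPoly
  rw [map_sum]
  refine Finset.sum_eq_zero fun i _ => ?_
  rw [map_mul, aeval_X, aeval_X]
  by_cases h : (i : ℕ) = (α : ℕ)
  · have : ¬ n ≤ (i : ℕ) := by omega
    simp [h, this]
  · simp [h]

lemma specHom_detPlus (n k : ℕ) (hnk : n ≤ k) : specHom n k (detPlus n k hnk) = 1 := by
  unfold detPlus
  rw [show (specHom n k) (Matrix.of fun α i : Fin n =>
      (X (Sum.inl (α, Fin.castLE hnk i)) : MvPolynomial ((Fin n × Fin k) ⊕ Fin k) ℂ)).det =
    ((specHom n k).toRingHom.mapMatrix (Matrix.of fun α i : Fin n =>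
      (X (Sum.inl (α, Fin.castLE hnk i)) : MvPolynomial ((Fin n × Fin k) ⊕ Fin k) ℂ))).det
    from RingHom.map_det _ _]
  have : (RingHom.mapMatrix (specHom n k).toRingHom)
      (Matrix.of fun α i : Fin n =>
        (X (Sum.inl (α, Fin.castLE hnk i)) : MvPolynomial ((Fin n × Fin k) ⊕ Fin k) ℂ)) = 1 := by
    ext α i
    simp only [RingHom.mapMatrix_apply, Matrix.map_apply, Matrix.of_apply, Matrix.one_apply]
    rw [show ((specHom n k).toRingHom : MvPolynomial ((Fin n × Fin k) ⊕ Fin k) ℂ →+*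
      MvPolynomial {i : Fin k // n ≤ (i : ℕ)} ℂ) (X (Sum.inl (α, Fin.castLE hnk i)))
      = specHom n k (X (Sum.inl (α, Fin.castLE hnk i))) from rfl]
    unfold specHom
    rw [aeval_X]
    simp only [Fin.coe_castLE]
    by_cases h : α = i
    · simp [h]
    · have : ¬ ((i : ℕ) = (α : ℕ)) := fun hc => h (Fin.ext hc.symm)
      simp [h, this]
  exact this ▸ Matrix.det_one

lemma specHom_wTail (n k : ℕ) (f : MvPolynomial {i : Fin k // n ≤ (i : ℕ)} ℂ) :
    specHom n k (wTailIncl n k f) = f := by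
  unfold specHom wTailIncl
  rw [aeval_rename]
  have : ((fun v : (Fin n × Fin k) ⊕ Fin k => match v with
    | Sum.inl (α, i) => if (i : ℕ) = (α : ℕ) then 1 else 0
    | Sum.inr i => if h : n ≤ (i : ℕ) then (X ⟨i, h⟩ : MvPolynomial {i : Fin k // n ≤ (i : ℕ)} ℂ)
        else 0) ∘ fun i : {i : Fin k // n ≤ (i : ℕ)} => Sum.inr i.1) = X := by
    funext i
    simp [i.2]
  rw [this, aeval_X_left, AlgHom.id_apply]

/-- Let `n, k` be positive integers with `k > n`.  If
`f ∈ ℂ[w_{n+1}, …, w_k]` satisfies `f · det₊ ∈ (q₁, …, q_n)`, then `f = 0`.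
Consequently the map `ℂ[w_{n+1},…,w_k] → P/(q₁,…,q_n)`, `f ↦ f·det₊`, is injective. -/
theorem stmt9 (n k : ℕ) (hn : 0 < n) (hnk : n < k) :
    (∀ f : MvPolynomial {i : Fin k // n ≤ (i : ℕ)} ℂ,
      wTailIncl n k f * detPlus n k hnk.le ∈
        Ideal.span (Set.range fun α : Fin n => qPoly n k α) → f = 0) ∧
    Function.Injective fun f : MvPolynomial {i : Fin k // n ≤ (i : ℕ)} ℂ =>
      Ideal.Quotient.mk (Ideal.span (Set.range fun α : Fin n => qPoly n k α))
        (wTailIncl n k f * detPlus n k hnk.le) := by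
  have key : ∀ f : MvPolynomial {i : Fin k // n ≤ (i : ℕ)} ℂ,
      wTailIncl n k f * detPlus n k hnk.le ∈
        Ideal.span (Set.range fun α : Fin n => qPoly n k α) → f = 0 := by
    intro f hf
    have hle : Ideal.span (Set.range fun α : Fin n => qPoly n k α) ≤
        RingHom.ker (specHom n k).toRingHom := by
      rw [Ideal.span_le]
      rintro _ ⟨α, rfl⟩
      exact specHom_qPoly n k α
    have := hle hf
    rw [RingHom.mem_ker] at this
    have this2 : specHom n k (wTailIncl n k f * detPlus n k hnk.le) = 0 := this
    have h2 : specHom n k (wTailIncl n k f * detPlus n k hnk.le) = f := by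
      rw [map_mul, specHom_detPlus, specHom_wTail, mul_one]
    rw [h2] at this2
    exact this2
  refine ⟨key, fun f g h => ?_⟩
  simp only [Ideal.Quotient.eq] at h
  have : wTailIncl n k (f - g) * detPlus n k hnk.le ∈
      Ideal.span (Set.range fun α : Fin n => qPoly n k α) := by
    rw [map_sub, sub_mul]
    exact h
  have := key _ this
  exact sub_eq_zero.mp this
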